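/- arXiv:1605.09193 — 2 statements merged into one kernel-verified Lean document; each statement's English description precedes it below -/
import Mathlib

section
/- For 0 < α < 1/2, the function f(n,α) = ∑_{l=0}^∞ ((1-2α)/(1-α))·(α/(1-α))^l · [ ∑_{m=0}^{n-l} C(m+n-1,m)·α^m·(1-α)^n·(α/(1-α))^{n+1-m-l} + ∑_{m=n-l+1}^∞ C(m+n-1,m)·α^m·(1-α)^n ] is strictly less than 1 for every n ≥ 0, and f(n,α) → 0 as n → ∞. -/
open Finset Filter

/-- The pre-mining-aware reversal-probability bound `f(n,α)` of the ε-arbitrary-robust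
acceptance policy.  For `l ≤ n`, the inner part is
`∑_{m=0}^{n-l} C(m+n-1,m) α^m (1-α)^n (α/(1-α))^{n+1-m-l} + ∑_{m=n-l+1}^∞ C(m+n-1,m) α^m (1-α)^n`;
for `l > n` the first sum is empty and the second runs over all `m ≥ 0`. -/
noncomputable def f (n : ℕ) (α : ℝ) : ℝ :=
  ∑' l : ℕ, ((1 - 2*α)/(1 - α)) * (α/(1 - α))^l *
    (if l ≤ n then
      (∑ m ∈ range (n - l + 1),
        (Nat.choose (m + n - 1) m : ℝ) * α^m * (1 - α)^n * (α/(1 - α))^(n + 1 - m - l)) +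
      (∑' j : ℕ, (Nat.choose ((j + (n - l + 1)) + n - 1) (j + (n - l + 1)) : ℝ) *
        α^(j + (n - l + 1)) * (1 - α)^n)
    else
      ∑' m : ℕ, (Nat.choose (m + n - 1) m : ℝ) * α^m * (1 - α)^n)

lemma aux_choose_le_two_pow (n k : ℕ) : n.choose k ≤ 2 ^ n := by
  rcases le_or_gt k n with h | h
  · calc n.choose k ≤ ∑ m ∈ range (n+1), n.choose m :=
        Finset.single_le_sum (fun i _ => Nat.zero_le _) (mem_range.2 (by omega))
      _ = 2 ^ n := Nat.sum_range_choose n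
  · simp [Nat.choose_eq_zero_of_lt h]

noncomputable def tt (α : ℝ) (n m : ℕ) : ℝ :=
  (Nat.choose (m + n - 1) m : ℝ) * α^m * (1-α)^n

noncomputable def FF (α : ℝ) (n l : ℕ) : ℝ :=
  ((1 - 2*α)/(1 - α)) * (α/(1 - α))^l *
    (if l ≤ n then
      (∑ m ∈ range (n - l + 1), tt α n m * (α/(1 - α))^(n + 1 - m - l)) +
      (∑' j : ℕ, tt α n (j + (n - l + 1)))
    else
      ∑' m : ℕ, tt α n m)

lemma f_eq (n : ℕ) (α : ℝ) : f n α = ∑' l, FF α n l := rfl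

section main
variable {α : ℝ} (hα0 : 0 < α) (hα : α < 1/2)
include hα0 hα

lemma aux_hasSum_t (n : ℕ) : HasSum (fun m : ℕ => tt α n m) 1 := by
  have h1 : (0:ℝ) < 1 - α := by linarith
  unfold tt
  cases n with
  | zero =>
      have h0 : ∀ m : ℕ, m ≠ 0 → (Nat.choose (m + 0 - 1) m : ℝ) * α^m * (1-α)^0 = 0 := by
        intro m hm
        rw [Nat.choose_eq_zero_of_lt (by omega)]
        simp
      have := hasSum_single (f := fun m : ℕ => (Nat.choose (m + 0 - 1) m : ℝ) * α^m * (1-α)^0)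
        0 (fun b hb => h0 b hb)
      simpa using this
  | succ k =>
      have hr : ‖α‖ < 1 := by rw [Real.norm_eq_abs, abs_of_pos hα0]; linarith
      have h := (hasSum_choose_mul_geometric_of_norm_lt_one k hr).mul_right ((1-α)^(k+1))
      have hval : 1 / (1-α)^(k+1) * (1-α)^(k+1) = (1:ℝ) := by
        rw [one_div, inv_mul_cancel₀ (pow_ne_zero _ h1.ne')]
      rw [hval] at h
      convert h using 2 with m
      congr 2
      have : m + (k+1) - 1 = m + k := by omega
      rw [this]
      rw [← Nat.choose_symm (Nat.le_add_right m k), Nat.add_sub_cancel_left]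

lemma tt_nonneg (n m : ℕ) : 0 ≤ tt α n m := by
  have h1 : (0:ℝ) < 1 - α := by linarith
  unfold tt
  positivity

lemma tt_le (n m : ℕ) : tt α n m ≤ (2*(1-α))^n * (2*α)^m := by
  have h1 : (0:ℝ) < 1 - α := by linarith
  have hc : ((Nat.choose (m + n - 1) m : ℕ) : ℝ) ≤ 2^n * 2^m := by
    have h2 : (m + n - 1).choose m ≤ 2 ^ (m + n) :=
      le_trans (aux_choose_le_two_pow _ _) (Nat.pow_le_pow_right (by norm_num) (by omega))
    calc ((Nat.choose (m + n - 1) m : ℕ) : ℝ) ≤ ((2 ^ (m+n) : ℕ) : ℝ) := by exact_mod_cast h2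
      _ = 2^n * 2^m := by push_cast [pow_add]; ring
  have : tt α n m ≤ (2^n * 2^m) * α^m * (1-α)^n := by
    unfold tt
    have h3 : (0:ℝ) ≤ α^m := by positivity
    have h4 : (0:ℝ) ≤ (1-α)^n := by positivity
    exact mul_le_mul_of_nonneg_right (mul_le_mul_of_nonneg_right hc h3) h4
  calc tt α n m ≤ (2^n * 2^m) * α^m * (1-α)^n := this
    _ = (2*(1-α))^n * (2*α)^m := by rw [mul_pow, mul_pow]; ring


lemma FF_nonneg (n l : ℕ) : 0 ≤ FF α n l := by
  have h1 : (0:ℝ) < 1 - α := by linarith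
  have htn := tt_nonneg hα0 hα (n := n)
  unfold FF
  have hc : (0:ℝ) ≤ (1 - 2*α)/(1-α) := div_nonneg (by linarith) h1.le
  have hb : (0:ℝ) ≤ (α/(1-α))^l := by positivity
  refine mul_nonneg (mul_nonneg hc hb) ?_
  split
  · exact add_nonneg (Finset.sum_nonneg fun m _ => mul_nonneg (htn m) (by positivity))
      (tsum_nonneg fun j => htn _)
  · exact tsum_nonneg fun m => htn m

lemma FF_le_geom (n : ℕ) : ∀ l, FF α n l ≤ (1 - 2*α)/(1-α) * (α/(1-α))^l := by
  have h1 : (0:ℝ) < 1 - α := by linarith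
  set β := α/(1-α) with hβdef
  have hβ0 : 0 < β := div_pos hα0 h1
  have hβ1 : β < 1 := (div_lt_one h1).2 (by linarith)
  have ht := aux_hasSum_t hα0 hα (α := α) n
  have hsumm := ht.summable
  have htsum : ∑' m, tt α n m = 1 := ht.tsum_eq
  have htn := tt_nonneg hα0 hα (n := n)
  have hinner_le : ∀ l : ℕ, l ≤ n →
      (∑ m ∈ range (n - l + 1), tt α n m * β^(n + 1 - m - l)) +
        (∑' j, tt α n (j + (n - l + 1))) ≤ 1 := by
    intro l hl
    have hS1 : (∑ m ∈ range (n - l + 1), tt α n m * β^(n + 1 - m - l)) ≤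
        ∑ m ∈ range (n - l + 1), tt α n m :=
      Finset.sum_le_sum fun m _ =>
        mul_le_of_le_one_right (htn m) (pow_le_one₀ hβ0.le hβ1.le)
    have hsplit := Summable.sum_add_tsum_nat_add (f := fun m => tt α n m) (n - l + 1) hsumm
    have : (∑ m ∈ range (n - l + 1), tt α n m) + (∑' j, tt α n (j + (n - l + 1))) = 1 := by
      rw [hsplit, htsum]
    linarith
  intro l
  unfold FF
  rw [← hβdef]
  by_cases hl : l ≤ n
  · rw [if_pos hl]
    exact mul_le_of_le_one_right
      (mul_nonneg (div_nonneg (by linarith) h1.le) (by positivity)) (hinner_le l hl)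
  · rw [if_neg hl, htsum, mul_one]

lemma f_lt_one (n : ℕ) : f n α < 1 := by
  have h1 : (0:ℝ) < 1 - α := by linarith
  set β := α/(1-α) with hβdef
  have hβ0 : 0 < β := div_pos hα0 h1
  have hβ1 : β < 1 := (div_lt_one h1).2 (by linarith)
  have hc : (1 - 2*α)/(1-α) = 1 - β := by rw [hβdef]; field_simp; ring
  have hcpos : 0 < (1 - 2*α)/(1-α) := div_pos (by linarith) h1
  have ht := aux_hasSum_t hα0 hα (α := α) n
  have hsumm := ht.summable
  have htsum : ∑' m, tt α n m = 1 := ht.tsum_eq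
  have htn := tt_nonneg hα0 hα (n := n)
  have hGs : HasSum (fun l : ℕ => (1 - 2*α)/(1-α) * β^l) 1 := by
    have hg := (hasSum_geometric_of_lt_one hβ0.le hβ1).mul_left ((1 - 2*α)/(1-α))
    have e : (1 - 2*α)/(1-α) * (1-β)⁻¹ = 1 := by
      rw [hc, mul_inv_cancel₀ (by linarith : (1:ℝ) - β ≠ 0)]
    rwa [e] at hg
  have hinner_le : ∀ l : ℕ, l ≤ n →
      (∑ m ∈ range (n - l + 1), tt α n m * β^(n + 1 - m - l)) +
        (∑' j, tt α n (j + (n - l + 1))) ≤ 1 := by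
    intro l hl
    have hS1 : (∑ m ∈ range (n - l + 1), tt α n m * β^(n + 1 - m - l)) ≤
        ∑ m ∈ range (n - l + 1), tt α n m :=
      Finset.sum_le_sum fun m _ =>
        mul_le_of_le_one_right (htn m) (pow_le_one₀ hβ0.le hβ1.le)
    have hsplit := Summable.sum_add_tsum_nat_add (f := fun m => tt α n m) (n - l + 1) hsumm
    have : (∑ m ∈ range (n - l + 1), tt α n m) + (∑' j, tt α n (j + (n - l + 1))) = 1 := by
      rw [hsplit, htsum]
    linarith
  have hFF_le : ∀ l, FF α n l ≤ (1 - 2*α)/(1-α) * β^l := by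
    intro l
    unfold FF
    rw [← hβdef]
    by_cases hl : l ≤ n
    · rw [if_pos hl]
      exact mul_le_of_le_one_right (by positivity) (hinner_le l hl)
    · rw [if_neg hl, htsum, mul_one]
  have hFF0 : FF α n 0 < (1 - 2*α)/(1-α) * β^0 := by
    unfold FF
    rw [← hβdef, if_pos (Nat.zero_le n)]
    simp only [pow_zero, mul_one, Nat.sub_zero]
    have hS1lt : (∑ m ∈ range (n + 1), tt α n m * β^(n + 1 - m)) <
        ∑ m ∈ range (n + 1), tt α n m := by
      apply Finset.sum_lt_sum
      · intro m _
        exact mul_le_of_le_one_right (htn m) (pow_le_one₀ hβ0.le hβ1.le)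
      · refine ⟨0, mem_range.2 (Nat.succ_pos n), ?_⟩
        have ht0 : tt α n 0 = (1-α)^n := by unfold tt; simp
        have hpos : 0 < tt α n 0 := by rw [ht0]; positivity
        have hblt : β^(n + 1 - 0) < 1 := pow_lt_one₀ hβ0.le hβ1 (by omega)
        calc tt α n 0 * β^(n + 1 - 0) < tt α n 0 * 1 :=
              mul_lt_mul_of_pos_left hblt hpos
          _ = tt α n 0 := mul_one _
    have hsplit := Summable.sum_add_tsum_nat_add (f := fun m => tt α n m) (n + 1) hsumm
    have h2 : (∑ m ∈ range (n + 1), tt α n m) + (∑' j, tt α n (j + (n + 1))) = 1 := by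
      rw [hsplit, htsum]
    have hlt1 : (∑ m ∈ range (n + 1), tt α n m * β^(n + 1 - m)) +
        (∑' j, tt α n (j + (n + 1))) < 1 := by linarith
    calc (1 - 2*α)/(1-α) * ((∑ m ∈ range (n + 1), tt α n m * β^(n + 1 - m)) +
          (∑' j, tt α n (j + (n + 1))))
        < (1 - 2*α)/(1-α) * 1 := mul_lt_mul_of_pos_left hlt1 hcpos
      _ = (1 - 2*α)/(1-α) := mul_one _
  have hlt := Summable.tsum_lt_tsum_of_nonneg (i := 0) (FF_nonneg hα0 hα n) hFF_le hFF0 hGs.summable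
  rw [f_eq]
  calc (∑' l, FF α n l) < ∑' l, (1 - 2*α)/(1-α) * β^l := hlt
    _ = 1 := hGs.tsum_eq


lemma FF_le_key (n l : ℕ) (hl : l ≤ n) :
    FF α n l ≤ ((n:ℝ)+1) * ((2*(1-α))^n * (2*α)^(n+1)) +
      ((2*(1-α))^n * (2*α)^(n+1)) * (1-2*α)⁻¹ := by
  have h1 : (0:ℝ) < 1 - α := by linarith
  set β := α/(1-α) with hβdef
  have hβ0 : 0 < β := div_pos hα0 h1
  have hβ1 : β < 1 := (div_lt_one h1).2 (by linarith)
  have hβ2α : β ≤ 2*α := by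
    rw [hβdef, div_le_iff₀ h1]; nlinarith
  have h2α0 : (0:ℝ) ≤ 2*α := by linarith
  have h2α1 : 2*α < 1 := by linarith
  have hc1 : (1 - 2*α)/(1-α) ≤ 1 := by
    rw [div_le_one h1]; linarith
  have hc0 : (0:ℝ) ≤ (1 - 2*α)/(1-α) := div_nonneg (by linarith) h1.le
  have htn := tt_nonneg hα0 hα (n := n)
  have hsumm := (aux_hasSum_t hα0 hα (α := α) n).summable
  set E : ℝ := (2*(1-α))^n * (2*α)^(n+1) with hEdef
  have hE0 : 0 ≤ E := by rw [hEdef]; positivity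
  unfold FF
  rw [← hβdef, if_pos hl]
  set S1 := ∑ m ∈ range (n - l + 1), tt α n m * β^(n + 1 - m - l) with hS1def
  set T := ∑' j, tt α n (j + (n - l + 1)) with hTdef
  have hX0 : 0 ≤ S1 + T := by
    refine add_nonneg (Finset.sum_nonneg fun m _ => mul_nonneg (htn m) (by positivity)) ?_
    exact tsum_nonneg fun j => htn _
  have step1 : (1 - 2*α)/(1-α) * β^l * (S1 + T) ≤ β^l * (S1 + T) := by
    rw [mul_assoc]
    exact mul_le_of_le_one_left (mul_nonneg (by positivity) hX0) hc1
  have hterm : ∀ m ∈ range (n - l + 1), β^l * (tt α n m * β^(n + 1 - m - l)) ≤ E := by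
    intro m hm
    have hm' : m ≤ n - l := by simpa [Nat.lt_succ_iff] using hm
    have hb1 : β^l ≤ (2*α)^l := pow_le_pow_left₀ hβ0.le hβ2α l
    have hb2 : β^(n + 1 - m - l) ≤ (2*α)^(n + 1 - m - l) := pow_le_pow_left₀ hβ0.le hβ2α _
    have hmul : β^l * (tt α n m * β^(n + 1 - m - l)) ≤
        (2*α)^l * (((2*(1-α))^n * (2*α)^m) * (2*α)^(n + 1 - m - l)) := by
      apply mul_le_mul hb1 ?_ (mul_nonneg (htn m) (by positivity)) (by positivity)
      exact mul_le_mul (tt_le hα0 hα n m) hb2 (by positivity) (by positivity)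
    refine hmul.trans (le_of_eq ?_)
    have e1 : (2*α)^l * ((2*α)^m * (2*α)^(n + 1 - m - l)) = (2*α)^(l+(m+(n+1-m-l))) := by
      rw [← pow_add, ← pow_add]
    have e3 : l+(m+(n+1-m-l)) = n+1 := by omega
    calc (2*α)^l * (((2*(1-α))^n * (2*α)^m) * (2*α)^(n + 1 - m - l))
        = (2*(1-α))^n * ((2*α)^l * ((2*α)^m * (2*α)^(n + 1 - m - l))) := by ring
      _ = (2*(1-α))^n * (2*α)^(n+1) := by rw [e1, e3]
      _ = E := hEdef.symm
  have hS1bound : β^l * S1 ≤ ((n:ℝ)+1) * E := by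
    rw [hS1def, Finset.mul_sum]
    calc (∑ m ∈ range (n - l + 1), β^l * (tt α n m * β^(n + 1 - m - l)))
        ≤ ∑ _m ∈ range (n - l + 1), E := Finset.sum_le_sum hterm
      _ = ((n - l + 1 : ℕ) : ℝ) * E := by rw [Finset.sum_const, card_range, nsmul_eq_mul]
      _ ≤ ((n:ℝ)+1) * E := by
          apply mul_le_mul_of_nonneg_right ?_ hE0
          have : ((n - l + 1 : ℕ) : ℝ) ≤ ((n + 1 : ℕ) : ℝ) := by exact_mod_cast by omega
          simpa using this
  have hTbound : β^l * T ≤ E * (1-2*α)⁻¹ := by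
    rw [hTdef, ← tsum_mul_left]
    have hpt : ∀ j : ℕ, β^l * tt α n (j + (n - l + 1)) ≤ E * (2*α)^j := by
      intro j
      have hb1 : β^l ≤ (2*α)^l := pow_le_pow_left₀ hβ0.le hβ2α l
      have : β^l * tt α n (j + (n - l + 1)) ≤
          (2*α)^l * ((2*(1-α))^n * (2*α)^(j + (n - l + 1))) :=
        mul_le_mul hb1 (tt_le hα0 hα n _) (htn _) (by positivity)
      refine this.trans (le_of_eq ?_)
      have e1 : (2*α)^l * (2*α)^(j + (n - l + 1)) = (2*α)^(l + (j + (n - l + 1))) :=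
        (pow_add _ _ _).symm
      have e3 : l + (j + (n - l + 1)) = (n+1) + j := by omega
      calc (2*α)^l * ((2*(1-α))^n * (2*α)^(j + (n - l + 1)))
          = (2*(1-α))^n * ((2*α)^l * (2*α)^(j + (n - l + 1))) := by ring
        _ = (2*(1-α))^n * (2*α)^((n+1)+j) := by rw [e1, e3]
        _ = E * (2*α)^j := by rw [pow_add, hEdef]; ring
    have hsummL : Summable (fun j : ℕ => β^l * tt α n (j + (n - l + 1))) :=
      (((summable_nat_add_iff (n - l + 1)).2 hsumm)).mul_left _
    have hsummR : Summable (fun j : ℕ => E * (2*α)^j) :=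
      (summable_geometric_of_lt_one h2α0 h2α1).mul_left E
    calc (∑' j, β^l * tt α n (j + (n - l + 1))) ≤ ∑' j, E * (2*α)^j :=
          Summable.tsum_le_tsum hpt hsummL hsummR
      _ = E * (1-2*α)⁻¹ := by
          rw [tsum_mul_left, tsum_geometric_of_lt_one h2α0 h2α1]
  calc (1 - 2*α)/(1-α) * β^l * (S1 + T) ≤ β^l * (S1 + T) := step1
    _ = β^l * S1 + β^l * T := mul_add _ _ _
    _ ≤ ((n:ℝ)+1) * E + E * (1-2*α)⁻¹ := add_le_add hS1bound hTbound

lemma f_le_bound (n : ℕ) : f n α ≤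
    ((n:ℝ)+1) * (((n:ℝ)+1) * ((2*(1-α))^n * (2*α)^(n+1)) +
      ((2*(1-α))^n * (2*α)^(n+1)) * (1-2*α)⁻¹) + (α/(1-α))^(n+1) := by
  have h1 : (0:ℝ) < 1 - α := by linarith
  set β := α/(1-α) with hβdef
  have hβ0 : 0 < β := div_pos hα0 h1
  have hβ1 : β < 1 := (div_lt_one h1).2 (by linarith)
  have hc : (1 - 2*α)/(1-α) = 1 - β := by rw [hβdef]; field_simp; ring
  have ht := aux_hasSum_t hα0 hα (α := α) n
  have htsum : ∑' m, tt α n m = 1 := ht.tsum_eq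
  set E : ℝ := (2*(1-α))^n * (2*α)^(n+1) with hEdef
  -- summability of FF
  have hGs : Summable (fun l : ℕ => (1 - 2*α)/(1-α) * β^l) :=
    (summable_geometric_of_lt_one hβ0.le hβ1).mul_left _
  have hFFsumm : Summable (fun l => FF α n l) := by
    apply Summable.of_nonneg_of_le (FF_nonneg hα0 hα n) ?_ hGs
    exact FF_le_geom hα0 hα n
  have hsplit := Summable.sum_add_tsum_nat_add (f := fun l => FF α n l) (n+1) hFFsumm
  rw [f_eq, ← hsplit]
  have htail : (∑' j, FF α n (j + (n+1))) = β^(n+1) := by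
    have hcong : ∀ j : ℕ, FF α n (j + (n+1)) = ((1 - 2*α)/(1-α) * β^(n+1)) * β^j := by
      intro j
      unfold FF
      rw [← hβdef, if_neg (by omega), htsum, mul_one, pow_add]
      ring
    rw [tsum_congr hcong, tsum_mul_left, tsum_geometric_of_lt_one hβ0.le hβ1, hc]
    have hne : (1:ℝ) - β ≠ 0 := by linarith
    field_simp
  rw [htail]
  apply add_le_add_left
  calc (∑ l ∈ range (n+1), FF α n l)
      ≤ ∑ _l ∈ range (n+1), (((n:ℝ)+1) * E + E * (1-2*α)⁻¹) := by
        apply Finset.sum_le_sum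
        intro l hl
        exact FF_le_key hα0 hα n l (by simpa [Nat.lt_succ_iff] using hl)
    _ = ((n+1:ℕ):ℝ) * (((n:ℝ)+1) * E + E * (1-2*α)⁻¹) := by
        rw [Finset.sum_const, card_range, nsmul_eq_mul]
    _ = ((n:ℝ)+1) * (((n:ℝ)+1) * E + E * (1-2*α)⁻¹) := by push_cast; ring


lemma f_nonneg (n : ℕ) : 0 ≤ f n α := by
  rw [f_eq]; exact tsum_nonneg (FF_nonneg hα0 hα n)

end main

/-- For `0 < α < 1/2`, `f(n,α) < 1` for every `n`, and `f(n,α) → 0` as `n → ∞`. -/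
theorem stmt_4 (α : ℝ) (hα0 : 0 < α) (hα : α < 1/2) :
    (∀ n : ℕ, f n α < 1) ∧ Tendsto (fun n : ℕ => f n α) atTop (nhds 0) := by
  constructor
  · exact fun n => f_lt_one hα0 hα n
  · have h1 : (0:ℝ) < 1 - α := by linarith
    set β : ℝ := α/(1-α) with hβdef
    have hβ0 : 0 < β := div_pos hα0 h1
    have hβ1 : β < 1 := (div_lt_one h1).2 (by linarith)
    set ρ : ℝ := (2*(1-α))*(2*α) with hρdef
    have hρ0 : (0:ℝ) ≤ ρ := by rw [hρdef]; positivity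
    have hρ1 : ρ < 1 := by rw [hρdef]; nlinarith [sq_nonneg (1-2*α)]
    set K : ℝ := (1-2*α)⁻¹ with hKdef
    have h2 := tendsto_pow_const_mul_const_pow_of_lt_one 2 hρ0 hρ1
    have h1' := tendsto_pow_const_mul_const_pow_of_lt_one 1 hρ0 hρ1
    have h0 := tendsto_pow_atTop_nhds_zero_of_lt_one hρ0 hρ1
    have hb := tendsto_pow_atTop_nhds_zero_of_lt_one hβ0.le hβ1
    have hG : Tendsto (fun n : ℕ => (2*α)*((n:ℝ)^2*ρ^n) + (2*α*(2+K))*((n:ℝ)^1*ρ^n)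
        + (2*α*(1+K))*ρ^n + β*β^n) atTop (nhds 0) := by
      have := (((h2.const_mul (2*α)).add (h1'.const_mul (2*α*(2+K)))).add
        (h0.const_mul (2*α*(1+K)))).add (hb.const_mul β)
      simpa using this
    apply squeeze_zero (fun n => f_nonneg hα0 hα n) ?_ hG
    intro n
    refine (f_le_bound hα0 hα n).trans (le_of_eq ?_)
    simp only [hβdef, hρdef, hKdef, mul_pow]
    ring
end

section
/- For 0 < α < 1/2, let ε > 0. Then there exists n such that f(n,α) < ε, so the policy σ^arb_α = min{n : f(n,α) < ε} is well-defined (the minimum is attained over a nonempty set). -/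
open Finset

lemma my_choose_le_two_pow (N k : ℕ) : (Nat.choose N k : ℝ) ≤ 2 ^ N := by
  rcases le_or_gt k N with h | h
  · have : Nat.choose N k ≤ 2 ^ N := by
      calc Nat.choose N k ≤ ∑ i ∈ range (N + 1), Nat.choose N i :=
            Finset.single_le_sum (fun i _ => Nat.zero_le _) (mem_range.2 (Nat.lt_succ_of_le h))
        _ = 2 ^ N := Nat.sum_range_choose N
    exact_mod_cast this
  · simp [Nat.choose_eq_zero_of_lt h]

lemma f_le (α : ℝ) (hα0 : 0 < α) (hα : α < 1/2) (n : ℕ) :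
    f n α ≤ ((1 - 2*α)/(1 - α)) * α * (4*α*(1-α))^n *
        ((1 - (2*(1-α))⁻¹)⁻¹ / (1-α) + (1 - 2*α)⁻¹) * (1 - (2*(1-α))⁻¹)⁻¹
      + ((1 - 2*α)/(1 - α)) * (2*α)^n * (1 - 2*α)⁻¹ * ((n : ℝ) + (1 - α/(1-α))⁻¹) := by
  have hβ : (0:ℝ) < 1 - α := by linarith
  have hs0 : (0:ℝ) ≤ 2*α := by linarith
  have hs1 : 2*α < 1 := by linarith
  have hs1' : (0:ℝ) < 1 - 2*α := by linarith
  have hr0 : (0:ℝ) ≤ α/(1-α) := le_of_lt (div_pos hα0 hβ)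
  have hr1 : α/(1-α) < 1 := by rw [div_lt_one hβ]; linarith
  have hu0 : (0:ℝ) ≤ (2*(1-α))⁻¹ := by positivity
  have hu1 : (2*(1-α))⁻¹ < 1 := by
    rw [inv_lt_one_iff₀]; right; linarith
  have hc0 : (0:ℝ) ≤ (1 - 2*α)/(1 - α) := le_of_lt (div_pos hs1' hβ)
  have hK0 : (0:ℝ) ≤ (1 - (2*(1-α))⁻¹)⁻¹ / (1-α) + (1 - 2*α)⁻¹ := by
    have : (0:ℝ) ≤ (1 - (2*(1-α))⁻¹)⁻¹ := by
      apply inv_nonneg.2; linarith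
    have h2 : (0:ℝ) ≤ (1 - 2*α)⁻¹ := by positivity
    have h3 : (0:ℝ) ≤ (1 - (2*(1-α))⁻¹)⁻¹ / (1-α) := div_nonneg this hβ.le
    linarith
  set c := (1 - 2*α)/(1 - α) with hc
  set r := α/(1-α) with hrdef
  set u := (2*(1-α))⁻¹ with hudef
  set K := (1 - u)⁻¹ / (1-α) + (1 - 2*α)⁻¹ with hKdef
  set A := c * α * (4*α*(1-α))^n * K with hA
  set B := c * (2*α)^n * (1 - 2*α)⁻¹ with hB
  have hA0 : 0 ≤ A := by
    rw [hA]; apply mul_nonneg (mul_nonneg (mul_nonneg hc0 hα0.le) (by positivity)) hK0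
  have hB0 : 0 ≤ B := by
    rw [hB]; apply mul_nonneg (mul_nonneg hc0 (by positivity)) (by positivity)
  -- the summand of f
  set term : ℕ → ℝ := fun l => c * r^l *
    (if l ≤ n then
      (∑ m ∈ range (n - l + 1),
        (Nat.choose (m + n - 1) m : ℝ) * α^m * (1 - α)^n * r^(n + 1 - m - l)) +
      (∑' j : ℕ, (Nat.choose ((j + (n - l + 1)) + n - 1) (j + (n - l + 1)) : ℝ) *
        α^(j + (n - l + 1)) * (1 - α)^n)
    else
      ∑' m : ℕ, (Nat.choose (m + n - 1) m : ℝ) * α^m * (1 - α)^n) with hterm_def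
  have hf : f n α = ∑' l, term l := by rw [f]
  set h : ℕ → ℝ := fun l => A * u^l + B * r^(l - n) with hh_def
  -- summability of h
  have hsum_u : Summable (fun l : ℕ => A * u^l) :=
    (summable_geometric_of_lt_one hu0 hu1).mul_left A
  have hsum_shift : Summable (fun l : ℕ => r^(l - n)) := by
    have : Summable (fun i : ℕ => r^((i + n) - n)) := by
      simpa using summable_geometric_of_lt_one hr0 hr1
    exact (summable_nat_add_iff n).1 this
  have hsum_r : Summable (fun l : ℕ => B * r^(l - n)) := hsum_shift.mul_left B
  have hsum_h : Summable h := hsum_u.add hsum_r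
  -- tsum of the shifted geometric
  have hS : ∑' l : ℕ, r^(l - n) = (n:ℝ) + (1 - r)⁻¹ := by
    have heq := Summable.sum_add_tsum_nat_add (f := fun l : ℕ => r^(l - n)) n hsum_shift
    rw [← heq]
    have h1 : ∑ i ∈ range n, r^(i - n) = (n:ℝ) := by
      rw [Finset.sum_congr rfl fun i hi => by
        rw [Nat.sub_eq_zero_of_le (le_of_lt (mem_range.1 hi)), pow_zero]]
      simp
    have h2 : ∑' i : ℕ, r^((i + n) - n) = (1 - r)⁻¹ := by
      simp only [Nat.add_sub_cancel]
      exact tsum_geometric_of_lt_one hr0 hr1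
    rw [h1, h2]
  -- nonnegativity of term
  have hterm_nonneg : ∀ l, 0 ≤ term l := by
    intro l
    apply mul_nonneg (mul_nonneg hc0 (pow_nonneg hr0 l))
    split
    · apply add_nonneg
      · apply Finset.sum_nonneg
        intro m _
        exact mul_nonneg (mul_nonneg (mul_nonneg (Nat.cast_nonneg _)
          (pow_nonneg hα0.le _)) (pow_nonneg hβ.le _)) (pow_nonneg hr0 _)
      · apply tsum_nonneg
        intro j
        exact mul_nonneg (mul_nonneg (Nat.cast_nonneg _) (pow_nonneg hα0.le _))
          (pow_nonneg hβ.le _)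
    · apply tsum_nonneg
      intro m
      exact mul_nonneg (mul_nonneg (Nat.cast_nonneg _) (pow_nonneg hα0.le _))
        (pow_nonneg hβ.le _)
  -- main termwise bound
  have hterm_le : ∀ l, term l ≤ h l := by
    intro l
    by_cases hl : l ≤ n
    · rw [hterm_def]
      simp only [if_pos hl]
      set d := n - l with hd
      have hld : l + d = n := by omega
      set M := (2:ℝ)^(d+n) * α^(d+1) * (1-α)^n with hM
      have hM0 : 0 ≤ M := by
        rw [hM]; positivity
      -- tail bound
      have tail_le : ∀ j : ℕ,
          (Nat.choose ((j + (d + 1)) + n - 1) (j + (d + 1)) : ℝ) * α^(j + (d + 1)) * (1-α)^n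
            ≤ M * (2*α)^j := by
        intro j
        have h1 : (Nat.choose ((j + (d + 1)) + n - 1) (j + (d + 1)) : ℝ)
            ≤ 2^((j + (d + 1)) + n - 1) := my_choose_le_two_pow _ _
        have h2 : (2:ℝ)^((j + (d + 1)) + n - 1) ≤ 2^(j + d + n) := by
          apply pow_le_pow_right₀ (by norm_num) (by omega)
        calc (Nat.choose ((j + (d + 1)) + n - 1) (j + (d + 1)) : ℝ) * α^(j + (d + 1)) * (1-α)^n
            ≤ (2:ℝ)^(j + d + n) * α^(j + (d + 1)) * (1-α)^n := by
              apply mul_le_mul_of_nonneg_right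
                (mul_le_mul_of_nonneg_right (h1.trans h2) (by positivity)) (by positivity)
          _ = M * (2*α)^j := by rw [hM]; simp only [mul_pow]; ring
      have tail_bnd_sum : Summable (fun j : ℕ => M * (2*α)^j) :=
        (summable_geometric_of_lt_one hs0 hs1).mul_left M
      have tail_nonneg : ∀ j : ℕ, (0:ℝ) ≤
          (Nat.choose ((j + (d + 1)) + n - 1) (j + (d + 1)) : ℝ) * α^(j + (d + 1)) * (1-α)^n :=
        fun j => mul_nonneg (mul_nonneg (Nat.cast_nonneg _) (pow_nonneg hα0.le _))
          (pow_nonneg hβ.le _)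
      have tail_summable : Summable (fun j : ℕ =>
          (Nat.choose ((j + (d + 1)) + n - 1) (j + (d + 1)) : ℝ) * α^(j + (d + 1)) * (1-α)^n) :=
        Summable.of_nonneg_of_le tail_nonneg tail_le tail_bnd_sum
      have tail_tsum_le : (∑' j : ℕ,
          (Nat.choose ((j + (d + 1)) + n - 1) (j + (d + 1)) : ℝ) * α^(j + (d + 1)) * (1-α)^n)
            ≤ M * (1 - 2*α)⁻¹ := by
        calc (∑' j : ℕ, (Nat.choose ((j + (d + 1)) + n - 1) (j + (d + 1)) : ℝ)
              * α^(j + (d + 1)) * (1-α)^n)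
            ≤ ∑' j : ℕ, M * (2*α)^j := Summable.tsum_le_tsum tail_le tail_summable tail_bnd_sum
          _ = M * (1 - 2*α)⁻¹ := by
              rw [tsum_mul_left, tsum_geometric_of_lt_one hs0 hs1]
      -- finite-sum bound
      have fin_le : (∑ m ∈ range (d + 1),
          (Nat.choose (m + n - 1) m : ℝ) * α^m * (1 - α)^n * r^(n + 1 - m - l))
            ≤ M * ((1 - u)⁻¹ / (1-α)) := by
        have step1 : (∑ m ∈ range (d + 1),
            (Nat.choose (m + n - 1) m : ℝ) * α^m * (1 - α)^n * r^(n + 1 - m - l))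
              ≤ ∑ m ∈ range (d + 1), (M / (1-α)) * u^(d - m) := by
          apply Finset.sum_le_sum
          intro m hm
          have hmd : m ≤ d := Nat.lt_succ_iff.1 (mem_range.1 hm)
          obtain ⟨j, hj⟩ := Nat.le.dest hmd
          have hexp : n + 1 - m - l = j + 1 := by omega
          have hdm : d - m = j := by omega
          rw [hexp, hdm]
          have h1 : (Nat.choose (m + n - 1) m : ℝ) ≤ 2^(m + n) :=
            (my_choose_le_two_pow _ _).trans (pow_le_pow_right₀ (by norm_num) (by omega))
          calc (Nat.choose (m + n - 1) m : ℝ) * α^m * (1 - α)^n * r^(j + 1)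
              ≤ (2:ℝ)^(m + n) * α^m * (1 - α)^n * r^(j + 1) := by
                apply mul_le_mul_of_nonneg_right (mul_le_mul_of_nonneg_right
                  (mul_le_mul_of_nonneg_right h1 (by positivity)) (by positivity))
                  (pow_nonneg hr0 _)
            _ = (M / (1-α)) * u^j := by
                rw [hM, ← hj, hrdef, hudef]
                simp only [div_pow, mul_inv, inv_pow, mul_pow]
                field_simp
                ring
        have step2 : ∑ m ∈ range (d + 1), (M / (1-α)) * u^(d - m)
            = (M / (1-α)) * ∑ j ∈ range (d + 1), u^j := by
          rw [← Finset.mul_sum]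
          congr 1
          have := Finset.sum_range_reflect (fun j => u^j) (d + 1)
          simpa using this
        have step3 : ∑ j ∈ range (d + 1), u^j ≤ (1 - u)⁻¹ := by
          have := Summable.sum_le_tsum (range (d + 1)) (fun i _ => pow_nonneg hu0 i)
            (summable_geometric_of_lt_one hu0 hu1)
          rw [tsum_geometric_of_lt_one hu0 hu1] at this
          exact this
        calc (∑ m ∈ range (d + 1),
            (Nat.choose (m + n - 1) m : ℝ) * α^m * (1 - α)^n * r^(n + 1 - m - l))
            ≤ ∑ m ∈ range (d + 1), (M / (1-α)) * u^(d - m) := step1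
          _ = (M / (1-α)) * ∑ j ∈ range (d + 1), u^j := step2
          _ ≤ (M / (1-α)) * (1 - u)⁻¹ := by
              apply mul_le_mul_of_nonneg_left step3 (by positivity)
          _ = M * ((1 - u)⁻¹ / (1-α)) := by ring
      -- combine
      have hbr : (∑ m ∈ range (d + 1),
          (Nat.choose (m + n - 1) m : ℝ) * α^m * (1 - α)^n * r^(n + 1 - m - l)) +
          (∑' j : ℕ, (Nat.choose ((j + (d + 1)) + n - 1) (j + (d + 1)) : ℝ)
            * α^(j + (d + 1)) * (1-α)^n)
            ≤ M * K := by
        rw [hKdef, mul_add]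
        exact add_le_add fin_le tail_tsum_le
      have key_eq : r^l * M = α * (4*α*(1-α))^n * u^l := by
        rw [hM, ← hld, hrdef, hudef,
          show (4:ℝ)*α*(1-α) = (2*α)*(2*(1-α)) from by ring]
        simp only [div_pow, mul_inv, inv_pow, mul_pow]
        field_simp
        ring
      calc c * r^l * ((∑ m ∈ range (d + 1),
            (Nat.choose (m + n - 1) m : ℝ) * α^m * (1 - α)^n * r^(n + 1 - m - l)) +
            (∑' j : ℕ, (Nat.choose ((j + (d + 1)) + n - 1) (j + (d + 1)) : ℝ)
              * α^(j + (d + 1)) * (1-α)^n))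
          ≤ c * r^l * (M * K) := by
            apply mul_le_mul_of_nonneg_left hbr
              (mul_nonneg hc0 (pow_nonneg hr0 l))
        _ = c * (r^l * M) * K := by ring
        _ = c * (α * (4*α*(1-α))^n * u^l) * K := by rw [key_eq]
        _ = A * u^l := by rw [hA]; ring
        _ ≤ h l := by
            rw [hh_def]
            exact le_add_of_nonneg_right (mul_nonneg hB0 (pow_nonneg hr0 _))
    · rw [hterm_def]
      simp only [if_neg hl]
      set M := (2*(1-α))^n with hM
      have hM0 : (0:ℝ) ≤ M := by rw [hM]; positivity
      have tail_le : ∀ m : ℕ,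
          (Nat.choose (m + n - 1) m : ℝ) * α^m * (1-α)^n ≤ M * (2*α)^m := by
        intro m
        have h1 : (Nat.choose (m + n - 1) m : ℝ) ≤ 2^(m + n) :=
          (my_choose_le_two_pow _ _).trans (pow_le_pow_right₀ (by norm_num) (by omega))
        calc (Nat.choose (m + n - 1) m : ℝ) * α^m * (1-α)^n
            ≤ (2:ℝ)^(m + n) * α^m * (1-α)^n := by
              apply mul_le_mul_of_nonneg_right
                (mul_le_mul_of_nonneg_right h1 (by positivity)) (by positivity)
          _ = M * (2*α)^m := by rw [hM]; simp only [mul_pow]; ring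
      have tail_bnd_sum : Summable (fun m : ℕ => M * (2*α)^m) :=
        (summable_geometric_of_lt_one hs0 hs1).mul_left M
      have tail_nonneg : ∀ m : ℕ, (0:ℝ) ≤ (Nat.choose (m + n - 1) m : ℝ) * α^m * (1-α)^n :=
        fun m => mul_nonneg (mul_nonneg (Nat.cast_nonneg _) (pow_nonneg hα0.le _))
          (pow_nonneg hβ.le _)
      have tail_summable : Summable (fun m : ℕ =>
          (Nat.choose (m + n - 1) m : ℝ) * α^m * (1-α)^n) :=
        Summable.of_nonneg_of_le tail_nonneg tail_le tail_bnd_sum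
      have tail_tsum_le : (∑' m : ℕ, (Nat.choose (m + n - 1) m : ℝ) * α^m * (1-α)^n)
          ≤ M * (1 - 2*α)⁻¹ := by
        calc (∑' m : ℕ, (Nat.choose (m + n - 1) m : ℝ) * α^m * (1-α)^n)
            ≤ ∑' m : ℕ, M * (2*α)^m := Summable.tsum_le_tsum tail_le tail_summable tail_bnd_sum
          _ = M * (1 - 2*α)⁻¹ := by
              rw [tsum_mul_left, tsum_geometric_of_lt_one hs0 hs1]
      have key_eq2 : r^l * M = (2*α)^n * r^(l - n) := by
        obtain ⟨k, hk⟩ : ∃ k, l = n + k := ⟨l - n, by omega⟩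
        subst hk
        rw [hM, hrdef, Nat.add_sub_cancel_left]
        simp only [div_pow, mul_pow]
        field_simp
        ring
      calc c * r^l * (∑' m : ℕ, (Nat.choose (m + n - 1) m : ℝ) * α^m * (1-α)^n)
          ≤ c * r^l * (M * (1 - 2*α)⁻¹) := by
            apply mul_le_mul_of_nonneg_left tail_tsum_le
              (mul_nonneg hc0 (pow_nonneg hr0 l))
        _ = c * (r^l * M) * (1 - 2*α)⁻¹ := by ring
        _ = c * ((2*α)^n * r^(l - n)) * (1 - 2*α)⁻¹ := by rw [key_eq2]
        _ = B * r^(l - n) := by rw [hB]; ring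
        _ ≤ h l := by
            rw [hh_def]
            exact le_add_of_nonneg_left (mul_nonneg hA0 (pow_nonneg hu0 _))
  -- assemble
  have hsum_term : Summable term := Summable.of_nonneg_of_le hterm_nonneg hterm_le hsum_h
  have final : f n α ≤ A * (1 - u)⁻¹ + B * ((n:ℝ) + (1 - r)⁻¹) := by
    rw [hf]
    calc ∑' l, term l ≤ ∑' l, h l := Summable.tsum_le_tsum hterm_le hsum_term hsum_h
      _ = (∑' l : ℕ, A * u^l) + ∑' l : ℕ, B * r^(l - n) := Summable.tsum_add hsum_u hsum_r
      _ = A * (1 - u)⁻¹ + B * ((n:ℝ) + (1 - r)⁻¹) := by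
          rw [tsum_mul_left, tsum_mul_left, tsum_geometric_of_lt_one hu0 hu1, hS]
  calc f n α ≤ A * (1 - u)⁻¹ + B * ((n:ℝ) + (1 - r)⁻¹) := final
    _ = _ := by simp only [hA, hB, hKdef, hudef, hrdef, hc]

/-- For every `ε > 0` there is `n` with `f(n,α) < ε`, so the policy
`σ^arb = min {n : f(n,α) < ε}` is well-defined. -/
theorem stmt_15 (α : ℝ) (hα0 : 0 < α) (hα : α < 1/2) (ε : ℝ) (hε : 0 < ε) :
    {n : ℕ | f n α < ε}.Nonempty := by
  have hβ : (0:ℝ) < 1 - α := by linarith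
  have hs1 : 2*α < 1 := by linarith
  have hρ : 4*α*(1-α) < 1 := by nlinarith [sq_nonneg (1 - 2*α)]
  have hρ0 : 0 ≤ 4*α*(1-α) := by positivity
  set C1 : ℝ := ((1 - 2*α)/(1 - α)) * α *
        ((1 - (2*(1-α))⁻¹)⁻¹ / (1-α) + (1 - 2*α)⁻¹) * (1 - (2*(1-α))⁻¹)⁻¹ with hC1
  set C2 : ℝ := ((1 - 2*α)/(1 - α)) * (1 - 2*α)⁻¹ with hC2
  set C3 : ℝ := C2 * (1 - α/(1-α))⁻¹ with hC3
  have key : ∀ n : ℕ, f n α ≤ C1 * (4*α*(1-α))^n + C2 * ((n:ℝ) * (2*α)^n) + C3 * (2*α)^n := by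
    intro n
    have := f_le α hα0 hα n
    calc f n α ≤ _ := this
      _ = C1 * (4*α*(1-α))^n + C2 * ((n:ℝ) * (2*α)^n) + C3 * (2*α)^n := by
          rw [hC1, hC2, hC3]; ring
  have htend : Filter.Tendsto
      (fun n : ℕ => C1 * (4*α*(1-α))^n + C2 * ((n:ℝ) * (2*α)^n) + C3 * (2*α)^n)
      Filter.atTop (nhds 0) := by
    have t1 := (tendsto_pow_atTop_nhds_zero_of_lt_one hρ0 hρ).const_mul C1
    have t2' : Filter.Tendsto (fun n : ℕ => (n:ℝ) * (2*α)^n) Filter.atTop (nhds 0) := by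
      simpa using tendsto_pow_const_mul_const_pow_of_lt_one 1 (by positivity) hs1
    have t2 := t2'.const_mul C2
    have t3 := (tendsto_pow_atTop_nhds_zero_of_lt_one (by positivity) hs1).const_mul C3
    simpa using (t1.add t2).add t3
  obtain ⟨n, hn⟩ := (htend.eventually_lt_const hε).exists
  exact ⟨n, lt_of_le_of_lt (key n) hn⟩
end
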